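/- If x is D-stationary for a positive definite diagonal matrix D and ‖x‖₀ < s, then ∇f(x) = 0; in particular, if f is convex, x is a global minimizer of f over ℝⁿ. -/

import Mathlib

open scoped RealInnerProductSpace

/-- The set of `s`-sparse vectors in `ℝⁿ`. -/
def sparseSet (n s : ℕ) : Set (EuclideanSpace ℝ (Fin n)) :=
  {x | (Finset.univ.filter fun i => x i ≠ 0).card ≤ s}

/-- The (set-valued) Euclidean projection onto the `s`-sparse vectors. -/
def sparseProj (n s : ℕ) (y : EuclideanSpace ℝ (Fin n)) : Set (EuclideanSpace ℝ (Fin n)) :=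
  {z | z ∈ sparseSet n s ∧ ∀ w ∈ sparseSet n s, ‖z - y‖ ≤ ‖w - y‖}

/-- `x` is `D`-stationary: `D^{1/2} x ∈ P_{C_s}(D^{1/2} x − D^{-1/2} ∇f(x))`. -/
def DStationary {n : ℕ} (s : ℕ) (f : EuclideanSpace ℝ (Fin n) → ℝ)
    (d : Fin n → ℝ) (x : EuclideanSpace ℝ (Fin n)) : Prop :=
  WithLp.toLp 2 (fun i => Real.sqrt (d i) * x i) ∈
    sparseProj n s (WithLp.toLp 2 fun i => Real.sqrt (d i) * x i - gradient f x i / Real.sqrt (d i))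

/-- If `x` is `D`-stationary with `‖x‖₀ < s`, then `∇f(x) = 0`; since `f`
is convex, `x` is a global minimizer of `f` over `ℝⁿ`. -/
theorem DStationary_sparsity_lt_imp_global_min {n s : ℕ}
    (f : EuclideanSpace ℝ (Fin n) → ℝ) (hf : ContDiff ℝ 1 f)
    (hconv : ConvexOn ℝ Set.univ f)
    (d : Fin n → ℝ) (hd : ∀ i, 0 < d i)
    (x : EuclideanSpace ℝ (Fin n))
    (hcard : (Finset.univ.filter fun i => x i ≠ 0).card < s)
    (hstat : DStationary s f d x) :
    gradient f x = 0 ∧ ∀ y, f x ≤ f y := by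
  have hsd : ∀ i, Real.sqrt (d i) ≠ 0 := fun i =>
    ne_of_gt (Real.sqrt_pos.mpr (hd i))
  set z : EuclideanSpace ℝ (Fin n) := WithLp.toLp 2 (fun i => Real.sqrt (d i) * x i) with hz
  set y' : EuclideanSpace ℝ (Fin n) :=
    WithLp.toLp 2 (fun i => Real.sqrt (d i) * x i - gradient f x i / Real.sqrt (d i)) with hy'
  have hgrad : gradient f x = 0 := by
    ext j
    show gradient f x j = 0
    by_contra hj
    -- the competitor: fix coordinate j of z to be y' j
    set w : EuclideanSpace ℝ (Fin n) := WithLp.toLp 2 (Function.update z.ofLp j (y' j)) with hw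
    have hwmem : w ∈ sparseSet n s := by
      have hsub : (Finset.univ.filter fun i => w i ≠ 0) ⊆
          insert j (Finset.univ.filter fun i => x i ≠ 0) := by
        intro i hi
        simp only [Finset.mem_filter, Finset.mem_univ, true_and] at hi
        by_cases hij : i = j
        · simp [hij]
        · rw [Finset.mem_insert]
          right
          simp only [Finset.mem_filter, Finset.mem_univ, true_and]
          intro hxi
          apply hi
          rw [hw, WithLp.ofLp_toLp, Function.update_of_ne hij, hz]
          simp [hxi]
      calc (Finset.univ.filter fun i => w i ≠ 0).card
          ≤ (insert j (Finset.univ.filter fun i => x i ≠ 0)).card :=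
            Finset.card_le_card hsub
        _ ≤ (Finset.univ.filter fun i => x i ≠ 0).card + 1 :=
            Finset.card_insert_le _ _
        _ ≤ s := hcard
    have hle := hstat.2 w hwmem
    -- compute the two squared norms
    have hnormz : ‖z - y'‖ = Real.sqrt (∑ i, ((z - y') i) ^ 2) := by
      rw [EuclideanSpace.norm_eq]
      congr 1
      exact Finset.sum_congr rfl fun i _ => by rw [Real.norm_eq_abs, sq_abs]
    have hnormw : ‖w - y'‖ = Real.sqrt (∑ i, ((w - y') i) ^ 2) := by
      rw [EuclideanSpace.norm_eq]
      congr 1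
      exact Finset.sum_congr rfl fun i _ => by rw [Real.norm_eq_abs, sq_abs]
    have hsum : (∑ i, ((w - y') i) ^ 2) = (∑ i, ((z - y') i) ^ 2) - ((z - y') j) ^ 2 := by
      rw [← Finset.add_sum_erase _ _ (Finset.mem_univ j),
        ← Finset.add_sum_erase _ (fun i => ((z - y') i) ^ 2) (Finset.mem_univ j)]
      have h1 : (w - y') j = 0 := by
        simp [hw, PiLp.sub_apply, Function.update_self]
      have h2 : ∀ i ∈ Finset.univ.erase j, ((w - y') i) ^ 2 = ((z - y') i) ^ 2 := by
        intro i hi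
        have hij : i ≠ j := Finset.ne_of_mem_erase hi
        simp [hw, PiLp.sub_apply, Function.update_of_ne hij]
      rw [Finset.sum_congr rfl h2, h1]
      ring
    have hsumle : (∑ i, ((z - y') i) ^ 2) ≤ (∑ i, ((w - y') i) ^ 2) := by
      have hle' : ‖z - y'‖ ≤ ‖w - y'‖ := hle
      rw [hnormz, hnormw] at hle'
      exact (Real.sqrt_le_sqrt_iff
        (Finset.sum_nonneg fun i _ => sq_nonneg _)).mp hle'
    have hzj : (z - y') j = 0 := by
      have : ((z - y') j) ^ 2 ≤ 0 := by
        rw [hsum] at hsumle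
        linarith
      have := sq_nonneg ((z - y') j)
      nlinarith [sq_abs ((z - y') j)]
    apply hj
    have : gradient f x j / Real.sqrt (d j) = 0 := by
      have := hzj
      simp only [PiLp.sub_apply, hz, hy'] at this
      linarith [this]
    field_simp at this
    exact (div_eq_zero_iff.mp this).resolve_right (hsd j)
  refine ⟨hgrad, fun y => ?_⟩
  -- global minimum along the line from x to y
  have hfd : fderiv ℝ f x = 0 := by
    have : gradient f x = (InnerProductSpace.toDual ℝ _).symm (fderiv ℝ f x) := rfl
    rw [this] at hgrad
    have := congrArg (InnerProductSpace.toDual ℝ (EuclideanSpace ℝ (Fin n))) hgrad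
    simpa using this
  set g : ℝ → ℝ := fun t => f (x + t • (y - x)) with hg
  have hgconv : ConvexOn ℝ Set.univ g := by
    have := hconv.comp_affineMap (AffineMap.lineMap x y : ℝ →ᵃ[ℝ] EuclideanSpace ℝ (Fin n))
    have heq : g = f ∘ (AffineMap.lineMap x y : ℝ →ᵃ[ℝ] EuclideanSpace ℝ (Fin n)) := by
      funext t
      simp [hg, AffineMap.lineMap_apply, add_comm]
    rw [heq]
    rw [Set.preimage_univ] at this
    exact this
  have hderiv : HasDerivAt g 0 0 := by
    have hc : HasDerivAt (fun t : ℝ => x + t • (y - x)) (y - x) 0 := by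
      simpa using ((hasDerivAt_id (0:ℝ)).smul_const (y - x)).const_add x
    have hfx : HasFDerivAt f (fderiv ℝ f x) ((fun t : ℝ => x + t • (y - x)) 0) := by
      simpa using (hf.differentiable one_ne_zero x).hasFDerivAt
    have := hfx.comp_hasDerivAt 0 hc
    simp [hfd] at this
    exact this
  have := hgconv.le_slope_of_hasDerivAt (Set.mem_univ 0) (Set.mem_univ 1)
    one_pos hderiv
  rw [slope_def_field] at this
  norm_num at this
  have h0 : g 0 = f x := by simp [hg]
  have h1 : g 1 = f y := by simp [hg]
  rw [h0, h1] at this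
  · linarith [this]
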